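/- The subalgebra P^G = {p ∈ P : p^g = p for all g ∈ G} of G-invariant elements of P is a free associative K-algebra on the orbit polynomials of the atoms: the K-algebra homomorphism from the free associative K-algebra on the set of atoms to P, which sends each atom a to its orbit polynomial \overline{x_a}, is injective and its image is exactly P^G. In particular, every G-invariant element of P is uniquely a polynomial, with coefficients in K, in the orbit polynomials \overline{x_a} of atoms a. -/

import Mathlib

open Finset

/-- The generator of the group `G` of circular permutations, acting as the
`K`-algebra automorphism of the free algebra sending `x_i` to `x_{i+1}` (mod `n`). -/
noncomputable def rotHom (K : Type*) [Field K] (n : ℕ) :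
    FreeAlgebra K (Fin n) →ₐ[K] FreeAlgebra K (Fin n) :=
  FreeAlgebra.lift K fun i => FreeAlgebra.ι K (finRotate n i)

/-- An atom: a nonempty word in the letters `{1,…,n}` (zero-based: `{0,…,n−1}`)
beginning with the letter `1` (zero-based `0`) and with no two adjacent letters
equal — so the corresponding monomial begins with `x_1` and has all its
indeterminates to the first power. -/
def AtomWord (n : ℕ) : Type :=
  {w : List (Fin n) // (w.map Fin.val).head? = some 0 ∧ w.Chain' (· ≠ ·)}

/-- The monomial `x_w = x_{i(1)} ⋯ x_{i(d)}` of a word `w`. -/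
noncomputable def wordMonomial (K : Type*) [Field K] (n : ℕ) (w : List (Fin n)) :
    FreeAlgebra K (Fin n) :=
  (w.map (FreeAlgebra.ι K)).prod

/-- The orbit polynomial `\overline{x_w} = ∑_{g ∈ G} (x_w)^g` of a word `w`
(the group `G` of circular permutations has order `n`). -/
noncomputable def orbitPoly (K : Type*) [Field K] (n : ℕ) (w : List (Fin n)) :
    FreeAlgebra K (Fin n) :=
  ∑ m ∈ Finset.range n, (⇑(rotHom K n))^[m] (wordMonomial K n w)

namespace CycInv

variable {n : ℕ}

abbrev W (n : ℕ) := List (Fin n)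

def shiftW (c : Fin n) (w : W n) : W n := w.map (· + c)

@[simp] lemma shiftW_nil (c : Fin n) : shiftW c ([] : W n) = [] := rfl

@[simp] lemma shiftW_cons (c a : Fin n) (w : W n) :
    shiftW c (a :: w) = (a + c) :: shiftW c w := rfl

@[simp] lemma shiftW_append (c : Fin n) (u v : W n) :
    shiftW c (u ++ v) = shiftW c u ++ shiftW c v := List.map_append

@[simp] lemma shiftW_length (c : Fin n) (w : W n) :
    (shiftW c w).length = w.length := List.length_map _

@[simp] lemma shiftW_zero [NeZero n] (w : W n) : shiftW 0 w = w := by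
  simp [shiftW]

lemma shiftW_shiftW (c d : Fin n) (w : W n) :
    shiftW c (shiftW d w) = shiftW (d + c) w := by
  simp [shiftW, Function.comp_def, add_assoc]

@[simp] lemma shiftW_eq_nil (c : Fin n) {w : W n} : shiftW c w = [] ↔ w = [] := by
  simp [shiftW]

lemma shiftW_chain' {c : Fin n} {w : W n} (h : w.Chain' (· ≠ ·)) :
    (shiftW c w).Chain' (· ≠ ·) := by
  rw [shiftW, List.Chain', List.isChain_map]
  exact List.IsChain.imp (fun a b hab => by simpa using hab) h

section NZ
variable [NeZero n]

def headL (w : W n) : Fin n := w.head?.getD 0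

def lastL (w : W n) : Fin n := w.getLast?.getD 0

@[simp] lemma headL_cons (a : Fin n) (w : W n) : headL (a :: w) = a := rfl

lemma headL_append {p : W n} (v : W n) (h : p ≠ []) : headL (p ++ v) = headL p := by
  cases p with
  | nil => exact absurd rfl h
  | cons a t => rfl

lemma headL_shiftW (c : Fin n) {w : W n} (h : w ≠ []) :
    headL (shiftW c w) = headL w + c := by
  cases w with
  | nil => exact absurd rfl h
  | cons a t => rfl

lemma head?_eq_headL {w : W n} (h : w ≠ []) : w.head? = some (headL w) := by
  cases w with
  | nil => exact absurd rfl h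
  | cons a t => rfl

lemma lastL_shiftW (c : Fin n) {w : W n} (h : w ≠ []) :
    lastL (shiftW c w) = lastL w + c := by
  unfold lastL shiftW
  rw [List.getLast?_map]
  rcases w.eq_nil_or_concat with rfl | ⟨l, b, rfl⟩
  · exact absurd rfl h
  · simp

def normW (p : W n) : W n := shiftW (-(headL p)) p

lemma shiftW_headL_normW (p : W n) : shiftW (headL p) (normW p) = p := by
  rw [normW, shiftW_shiftW]
  simp

lemma headL_normW {p : W n} (h : p ≠ []) : headL (normW p) = 0 := by
  rw [normW, headL_shiftW _ h]
  simp

lemma normW_shiftW {w : W n} (c : Fin n) (hw : w ≠ []) (h0 : headL w = 0) :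
    normW (shiftW c w) = w := by
  rw [normW, headL_shiftW _ hw, h0, shiftW_shiftW]
  simp

end NZ



def splitRun : W n → W n × W n
  | [] => ([], [])
  | [a] => ([a], [])
  | a :: b :: t =>
    if a = b then ([a], b :: t)
    else ((a :: (splitRun (b :: t)).1), (splitRun (b :: t)).2)

@[simp] lemma splitRun_nil : splitRun ([] : W n) = ([], []) := rfl
@[simp] lemma splitRun_single (a : Fin n) : splitRun [a] = ([a], []) := rfl
lemma splitRun_cons_cons (a b : Fin n) (t : W n) :
    splitRun (a :: b :: t) = if a = b then ([a], b :: t)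
      else ((a :: (splitRun (b :: t)).1), (splitRun (b :: t)).2) := rfl

lemma splitRun_append : ∀ u : W n, (splitRun u).1 ++ (splitRun u).2 = u
  | [] => rfl
  | [a] => rfl
  | a :: b :: t => by
    rw [splitRun_cons_cons]
    split
    · rfl
    · simpa using splitRun_append (b :: t)

lemma splitRun_fst_ne_nil : ∀ {u : W n}, u ≠ [] → (splitRun u).1 ≠ []
  | [], h => absurd rfl h
  | [a], _ => by simp
  | a :: b :: t, _ => by
    rw [splitRun_cons_cons]
    split <;> simp

lemma splitRun_snd_length_lt : ∀ {u : W n}, u ≠ [] → (splitRun u).2.length < u.length := by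
  intro u h
  conv_rhs => rw [← splitRun_append u]
  rw [List.length_append]
  have := splitRun_fst_ne_nil h
  cases hp : (splitRun u).1 with
  | nil => exact absurd hp this
  | cons x l => simp [hp]

lemma splitRun_fst_chain' : ∀ u : W n, (splitRun u).1.Chain' (· ≠ ·)
  | [] => by simp [List.Chain']
  | [a] => by simp [List.Chain']
  | a :: b :: t => by
    rw [splitRun_cons_cons]
    split
    · simp [List.Chain']
    · rename_i hab
      have ih := splitRun_fst_chain' (b :: t)
      have hhd : (splitRun (b :: t)).1.head? = some b := by
        conv_rhs => rw [show (some b = (b :: t).head?) from rfl]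
        conv_rhs => rw [← splitRun_append (b :: t)]
        cases hq : (splitRun (b :: t)).1 with
        | nil => exact absurd hq (splitRun_fst_ne_nil (by simp))
        | cons x l => simp
      simp only []
      rw [List.Chain', List.isChain_cons]
      refine ⟨?_, ih⟩
      intro y hy
      rw [hhd] at hy
      cases hy
      exact hab

lemma splitRun_boundary : ∀ {u : W n}, (splitRun u).2 ≠ [] →
    (splitRun u).1.getLast? = (splitRun u).2.head?
  | [], h => absurd rfl h
  | [a], h => absurd rfl h
  | a :: b :: t, h => by
    by_cases hab : a = b
    · subst hab; rw [splitRun_cons_cons, if_pos rfl]; simp [List.getLast?_singleton]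
    · rw [splitRun_cons_cons, if_neg hab] at h ⊢
      have ih := splitRun_boundary (u := b :: t) h
      have h1 := splitRun_fst_ne_nil (u := b :: t) (by simp)
      show (a :: (splitRun (b :: t)).1).getLast? = _
      rw [List.getLast?_cons, ← ih]
      cases hq : (splitRun (b :: t)).1.getLast? with
      | none => exact absurd (List.getLast?_eq_none_iff.mp hq) h1
      | some x => rfl

lemma splitRun_eq_of_boundary : ∀ {p : W n}, p ≠ [] → p.Chain' (· ≠ ·) →
    ∀ {v : W n}, (v = [] ∨ p.getLast? = v.head?) → splitRun (p ++ v) = (p, v)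
  | [], hp, _, _, _ => absurd rfl hp
  | [a], _, _, v, hv => by
    rcases hv with rfl | hv
    · simp
    · cases v with
      | nil => simp
      | cons b t =>
        simp only [List.getLast?_singleton, List.head?_cons, Option.some.injEq] at hv
        subst hv
        simp [splitRun_cons_cons]
  | a :: c :: q, hp, hc, v, hv => by
    have hq : (c :: q : W n) ≠ [] := by simp
    have hac : a ≠ c := (List.isChain_cons_cons.mp hc).1
    have hgl : (a :: c :: q).getLast? = (c :: q).getLast? := List.getLast?_cons_cons ..
    have ih := splitRun_eq_of_boundary hq (List.isChain_cons_cons.mp hc).2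
        (v := v) (by rwa [hgl] at hv)
    show splitRun (a :: (c :: q ++ v)) = _
    cases v with
    | nil =>
      rw [List.append_nil] at ih ⊢
      rw [show (a :: c :: q) = a :: (c :: q) from rfl, show a :: (c :: q) = [a] ++ c :: q from rfl]
      rw [show ([a] ++ c :: q : W n) = a :: c :: q from rfl, splitRun_cons_cons, if_neg hac, ih]
    | cons b t =>
      rw [show (a :: (c :: q ++ b :: t)) = a :: c :: (q ++ b :: t) from rfl,
        splitRun_cons_cons, if_neg hac]
      have : (c :: q) ++ (b :: t) = c :: (q ++ b :: t) := rfl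
      rw [← this, ih]

lemma splitRun_eq_of_ne_boundary : ∀ {p : W n}, p ≠ [] → p.Chain' (· ≠ ·) →
    ∀ {v : W n}, v ≠ [] → p.getLast? ≠ v.head? →
    splitRun (p ++ v) = (p ++ (splitRun v).1, (splitRun v).2)
  | [], hp, _, _, _, _ => absurd rfl hp
  | [a], _, _, v, hv, hne => by
    cases v with
    | nil => exact absurd rfl hv
    | cons b t =>
      have hab : a ≠ b := by simpa using hne
      simp [splitRun_cons_cons, hab]
  | a :: c :: q, hp, hc, v, hv, hne => by
    have hq : (c :: q : W n) ≠ [] := by simp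
    have hac : a ≠ c := (List.isChain_cons_cons.mp hc).1
    have hgl : (a :: c :: q).getLast? = (c :: q).getLast? := List.getLast?_cons_cons ..
    have ih := splitRun_eq_of_ne_boundary hq (List.isChain_cons_cons.mp hc).2 hv
        (by rwa [hgl] at hne)
    show splitRun (a :: (c :: q ++ v)) = _
    cases v with
    | nil => exact absurd rfl hv
    | cons b t =>
      rw [show (a :: (c :: q ++ b :: t)) = a :: c :: (q ++ b :: t) from rfl,
        splitRun_cons_cons, if_neg hac]
      have : (c :: q) ++ (b :: t) = c :: (q ++ b :: t) := rfl
      rw [← this, ih]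
      rfl

def blocksOf (u : W n) : List (W n) :=
  if h : u = [] then [] else (splitRun u).1 :: blocksOf (splitRun u).2
  termination_by u.length
  decreasing_by exact splitRun_snd_length_lt h

@[simp] lemma blocksOf_nil : blocksOf ([] : W n) = [] := by
  rw [blocksOf]; simp

lemma blocksOf_ne_nil {u : W n} (h : u ≠ []) :
    blocksOf u = (splitRun u).1 :: blocksOf (splitRun u).2 := by
  rw [blocksOf]; simp [h]


end CycInv

namespace CycInv
variable {n : ℕ} [NeZero n]

lemma getLast?_eq_lastL {w : W n} (h : w ≠ []) : w.getLast? = some (lastL w) := by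
  rcases w.eq_nil_or_concat with rfl | ⟨l, b, rfl⟩
  · exact absurd rfl h
  · simp [lastL]

lemma atom_ne_nil (a : AtomWord n) : a.1 ≠ [] := by
  intro h
  have := a.2.1
  rw [h] at this
  simp at this

lemma atom_head? (a : AtomWord n) : a.1.head? = some 0 := by
  have h2 := a.2.1
  cases h : a.1 with
  | nil => rw [h] at h2; simp at h2
  | cons x l =>
    rw [h] at h2
    simp only [List.map_cons, List.head?_cons, Option.some.injEq] at h2
    simp only [List.head?_cons]
    exact congrArg some ((Fin.ext (by simpa using h2) : x = 0))

lemma atom_headL (a : AtomWord n) : headL a.1 = 0 := by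
  unfold headL
  rw [atom_head? a]
  rfl

lemma atom_chain' (a : AtomWord n) : a.1.Chain' (· ≠ ·) := a.2.2

open Classical in
noncomputable def toAtom (p : W n) : AtomWord n :=
  if h : p.head? = some (0 : Fin n) ∧ p.Chain' (· ≠ ·) then
    ⟨p, ⟨by rw [List.head?_map, h.1]; simp, h.2⟩⟩
  else ⟨[0], by simp [List.Chain']⟩

lemma toAtom_val {p : W n} (h1 : p.head? = some (0 : Fin n)) (h2 : p.Chain' (· ≠ ·)) :
    (toAtom p).1 = p := by
  unfold toAtom
  exact congrArg Subtype.val (dif_pos (And.intro h1 h2))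

lemma toAtom_atom (a : AtomWord n) : toAtom a.1 = a :=
  Subtype.ext (toAtom_val (atom_head? a) (atom_chain' a))

lemma normW_shiftW_atom (a : AtomWord n) (c : Fin n) : normW (shiftW c a.1) = a.1 :=
  normW_shiftW c (atom_ne_nil a) (atom_headL a)

lemma toAtom_normW_shiftW (a : AtomWord n) (c : Fin n) :
    toAtom (normW (shiftW c a.1)) = a := by
  rw [normW_shiftW_atom, toAtom_atom]

def MemT : List (AtomWord n) → W n → Prop
  | [], u => u = []
  | a :: A, u => ∃ c v, u = shiftW c a.1 ++ v ∧ MemT A v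

@[simp] lemma MemT_nil (u : W n) : MemT [] u ↔ u = [] := Iff.rfl
@[simp] lemma MemT_cons (a : AtomWord n) (A : List (AtomWord n)) (u : W n) :
    MemT (a :: A) u ↔ ∃ c v, u = shiftW c a.1 ++ v ∧ MemT A v := Iff.rfl

def lenT (A : List (AtomWord n)) : ℕ := (A.map fun a => a.1.length).sum

lemma MemT.lengthEq {A : List (AtomWord n)} : ∀ {u : W n}, MemT A u → u.length = lenT A := by
  induction A with
  | nil => intro u h; rw [MemT_nil] at h; subst h; rfl
  | cons a A ih =>
    intro u h
    rcases h with ⟨c, v, rfl, hv⟩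
    simp only [List.length_append, shiftW_length, lenT, List.map_cons, List.sum_cons]
    rw [ih hv]
    rfl

lemma MemT.shiftW' (d : Fin n) {A : List (AtomWord n)} : ∀ {u : W n},
    MemT A u → MemT A (shiftW d u) := by
  induction A with
  | nil => intro u h; rw [MemT_nil] at h; subst h; rfl
  | cons a A ih =>
    intro u h
    rcases h with ⟨c, v, rfl, hv⟩
    exact ⟨c + d, shiftW d v, by rw [shiftW_append, shiftW_shiftW], ih hv⟩

noncomputable def joinC : List (AtomWord n) → Fin n → W n
  | [], _ => []
  | a :: A, c => shiftW c a.1 ++ joinC A (c + lastL a.1)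

@[simp] lemma joinC_nil (c : Fin n) : joinC ([] : List (AtomWord n)) c = [] := rfl

lemma memT_joinC : ∀ (A : List (AtomWord n)) (c : Fin n), MemT A (joinC A c)
  | [], _ => rfl
  | a :: A, c => ⟨c, _, rfl, memT_joinC A _⟩

lemma shiftW_joinC (d : Fin n) : ∀ (A : List (AtomWord n)) (c : Fin n),
    shiftW d (joinC A c) = joinC A (c + d)
  | [], _ => rfl
  | a :: A, c => by
    show shiftW d (shiftW c a.1 ++ joinC A (c + lastL a.1)) = _
    rw [shiftW_append, shiftW_shiftW, shiftW_joinC d A, joinC]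
    rw [add_right_comm]

lemma joinC_ne_nil {A : List (AtomWord n)} (h : A ≠ []) (c : Fin n) : joinC A c ≠ [] := by
  cases A with
  | nil => exact absurd rfl h
  | cons a A =>
    show shiftW c a.1 ++ _ ≠ []
    simp [atom_ne_nil a]

lemma headL_joinC {A : List (AtomWord n)} (h : A ≠ []) (c : Fin n) :
    headL (joinC A c) = c := by
  cases A with
  | nil => exact absurd rfl h
  | cons a A =>
    show headL (shiftW c a.1 ++ _) = c
    rw [headL_append _ (by simp [atom_ne_nil a]), headL_shiftW c (atom_ne_nil a),
      atom_headL, zero_add]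

lemma head?_joinC {A : List (AtomWord n)} (h : A ≠ []) (c : Fin n) :
    (joinC A c).head? = some c := by
  rw [head?_eq_headL (joinC_ne_nil h c), headL_joinC h]

lemma length_blocksOf_joinC : ∀ (A : List (AtomWord n)) (c : Fin n),
    (blocksOf (joinC A c)).length = A.length
  | [], _ => by simp
  | a :: A, c => by
    show (blocksOf (shiftW c a.1 ++ joinC A (c + lastL a.1))).length = _
    have hp : shiftW c a.1 ≠ [] := by simp [atom_ne_nil a]
    have hchain : (shiftW c a.1).Chain' (· ≠ ·) := shiftW_chain' (atom_chain' a)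
    have hb : joinC A (c + lastL a.1) = [] ∨
        (shiftW c a.1).getLast? = (joinC A (c + lastL a.1)).head? := by
      cases A with
      | nil => exact Or.inl rfl
      | cons b B =>
        right
        rw [head?_joinC (by simp), getLast?_eq_lastL hp, lastL_shiftW c (atom_ne_nil a),
          add_comm]
    rw [blocksOf_ne_nil (by simp [hp]), splitRun_eq_of_boundary hp hchain hb]
    simp only [List.length_cons]
    rw [length_blocksOf_joinC A]

noncomputable def factor (u : W n) : List (AtomWord n) :=
  (blocksOf u).map fun p => toAtom (normW p)

@[simp] lemma factor_nil : factor ([] : W n) = [] := by simp [factor]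

lemma factor_length (u : W n) : (factor u).length = (blocksOf u).length :=
  List.length_map _

lemma blocksOf_pos {u : W n} (h : u ≠ []) : 1 ≤ (blocksOf u).length := by
  rw [blocksOf_ne_nil h]
  simp

lemma memT_blocksOf {A : List (AtomWord n)} : ∀ {u : W n}, MemT A u →
    (blocksOf u).length ≤ A.length ∧ ((blocksOf u).length = A.length → factor u = A) := by
  induction A with
  | nil =>
    intro u h
    rw [MemT_nil] at h; subst h; simp [factor]
  | cons a A ihA =>
    intro u h
    rcases h with ⟨c, v, rfl, hv⟩
    have hp : shiftW c a.1 ≠ [] := by simp [atom_ne_nil a]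
    have hchain : (shiftW c a.1).Chain' (· ≠ ·) := shiftW_chain' (atom_chain' a)
    have ih := ihA hv
    by_cases hb : v = [] ∨ (shiftW c a.1).getLast? = v.head?
    · rw [blocksOf_ne_nil (by simp [hp]), splitRun_eq_of_boundary hp hchain hb]
      constructor
      · simpa using Nat.succ_le_succ ih.1
      · intro hlen
        simp only [List.length_cons] at hlen
        have hfv := ih.2 (by omega)
        rw [factor, blocksOf_ne_nil (by simp [hp]), splitRun_eq_of_boundary hp hchain hb,
          List.map_cons, toAtom_normW_shiftW]
        rw [show ((blocksOf v).map fun p => toAtom (normW p)) = factor v from rfl, hfv]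
    · push_neg at hb
      obtain ⟨hv0, hne⟩ := hb
      rw [blocksOf_ne_nil (by simp [hp]), splitRun_eq_of_ne_boundary hp hchain hv0 hne]
      have hbv : blocksOf v = (splitRun v).1 :: blocksOf (splitRun v).2 := blocksOf_ne_nil hv0
      rw [hbv] at ih
      simp only [List.length_cons] at ih ⊢
      omega

lemma factor_spec : ∀ (N : ℕ) (u : W n), u.length ≤ N →
    MemT (factor u) u ∧ (u ≠ [] → joinC (factor u) (headL u) = u) := by
  intro N
  induction N with
  | zero =>
    intro u hu
    have : u = [] := List.length_eq_zero_iff.mp (Nat.le_zero.mp hu)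
    subst this
    exact ⟨by rw [factor_nil]; rfl, fun h => absurd rfl h⟩
  | succ N ihN =>
    intro u hu
    by_cases h : u = []
    · subst h; exact ⟨by rw [factor_nil]; rfl, fun h => absurd rfl h⟩
    · obtain ⟨p, r, hsp⟩ : ∃ p r, splitRun u = (p, r) := ⟨_, _, rfl⟩
      have hur : p ++ r = u := by rw [← splitRun_append u, hsp]
      have hp : p ≠ [] := by have := splitRun_fst_ne_nil h; rwa [hsp] at this
      have hchain : p.Chain' (· ≠ ·) := by have := splitRun_fst_chain' u; rwa [hsp] at this
      have hrlen : r.length ≤ N := by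
        have := splitRun_snd_length_lt (u := u) h
        rw [hsp] at this
        simp only [] at this
        omega
      have ihr := ihN r hrlen
      have hblocks : blocksOf u = p :: blocksOf r := by
        rw [blocksOf_ne_nil h, hsp]
      have hfac : factor u = toAtom (normW p) :: factor r := by
        rw [factor, hblocks, List.map_cons]; rfl
      have hval : (toAtom (normW p)).1 = normW p :=
        toAtom_val (by rw [head?_eq_headL (by simp [normW, hp]), headL_normW hp])
          (shiftW_chain' hchain)
      constructor
      · rw [hfac]
        exact ⟨headL p, r, by rw [hval, shiftW_headL_normW, hur], ihr.1⟩
      · intro _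
        rw [hfac]
        show shiftW (headL u) (toAtom (normW p)).1 ++
          joinC (factor r) (headL u + lastL (toAtom (normW p)).1) = u
        rw [hval]
        have hheadu : headL u = headL p := by rw [← hur, headL_append _ hp]
        rw [hheadu, shiftW_headL_normW]
        by_cases hr : r = []
        · subst hr
          rw [show factor ([] : W n) = [] from factor_nil, joinC_nil, List.append_nil]
          rw [← hur, List.append_nil]
        · have hlast : lastL (normW p) = lastL p + -(headL p) := lastL_shiftW _ hp
          have hbd : p.getLast? = r.head? := by
            have := splitRun_boundary (u := u) (by rw [hsp]; exact hr)
            rwa [hsp] at this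
          have : headL p + lastL (normW p) = headL r := by
            rw [hlast]
            have : lastL p = headL r := by
              rw [getLast?_eq_lastL hp, head?_eq_headL hr] at hbd
              exact Option.some.inj hbd
            rw [← this]; abel
          rw [this, ihr.2 hr, hur]

lemma memT_factor (u : W n) : MemT (factor u) u :=
  (factor_spec u.length u le_rfl).1

lemma joinC_factor {u : W n} (h : u ≠ []) : joinC (factor u) (headL u) = u :=
  (factor_spec u.length u le_rfl).2 h

lemma splitRun_shiftW (c : Fin n) : ∀ u : W n,
    splitRun (shiftW c u) = (shiftW c (splitRun u).1, shiftW c (splitRun u).2)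
  | [] => rfl
  | [a] => rfl
  | a :: b :: t => by
    show splitRun ((a + c) :: (b + c) :: shiftW c t) = _
    rw [splitRun_cons_cons, splitRun_cons_cons]
    by_cases hab : a = b
    · rw [if_pos (by rw [hab]), if_pos hab]
      rfl
    · rw [if_neg (fun hh => hab (add_right_cancel hh)), if_neg hab]
      have ih := splitRun_shiftW c (b :: t)
      rw [show ((b + c) :: shiftW c t : W n) = shiftW c (b :: t) from rfl, ih]
      rfl

lemma length_blocksOf_shiftW (c : Fin n) : ∀ (N : ℕ) (u : W n), u.length ≤ N →
    (blocksOf (shiftW c u)).length = (blocksOf u).length := by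
  intro N
  induction N with
  | zero =>
    intro u hu
    have : u = [] := List.length_eq_zero_iff.mp (Nat.le_zero.mp hu)
    subst this; simp
  | succ N ihN =>
    intro u hu
    by_cases h : u = []
    · subst h; simp
    · rw [blocksOf_ne_nil h, blocksOf_ne_nil (by simp [h]), splitRun_shiftW]
      simp only [List.length_cons]
      have := splitRun_snd_length_lt (u := u) h
      rw [ihN (splitRun u).2 (by omega)]

end CycInv

namespace CycInv

section Alg

variable (K : Type*) [Field K] {n : ℕ} [NeZero n]

attribute [local instance] Classical.propDecidable

local notation "e" => FreeAlgebra.equivMonoidAlgebraFreeMonoid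

lemma e_monomial {X : Type*} (w : List X) :
    (e : FreeAlgebra K X ≃ₐ[K] _) ((w.map (FreeAlgebra.ι K)).prod)
      = MonoidAlgebra.single (FreeMonoid.ofList w) 1 := by
  induction w with
  | nil =>
    simp only [List.map_nil, List.prod_nil, map_one]
    rfl
  | cons a t ih =>
    rw [List.map_cons, List.prod_cons, map_mul, ih]
    have ha : (e : FreeAlgebra K X ≃ₐ[K] _) (FreeAlgebra.ι K a)
        = MonoidAlgebra.single (FreeMonoid.of a) 1 := by
      simp [FreeAlgebra.equivMonoidAlgebraFreeMonoid]
    rw [ha, MonoidAlgebra.single_mul_single, one_mul, FreeMonoid.ofList_cons]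

lemma finRotate_eq_add_one (i : Fin n) : finRotate n i = i + 1 := by
  obtain ⟨m, rfl⟩ := Nat.exists_eq_succ_of_ne_zero (NeZero.ne n)
  exact finRotate_succ_apply i

lemma rot_wordMonomial (w : W n) :
    rotHom K n (wordMonomial K n w) = wordMonomial K n (shiftW 1 w) := by
  induction w with
  | nil => simp [wordMonomial]
  | cons a t ih =>
    rw [show wordMonomial K n (a :: t) = FreeAlgebra.ι K a * wordMonomial K n t from by
      simp [wordMonomial]]
    rw [map_mul, ih, rotHom, FreeAlgebra.lift_ι_apply, finRotate_eq_add_one]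
    simp [wordMonomial, shiftW]

open Fin.NatCast in
lemma rot_iter_wordMonomial (m : ℕ) (w : W n) :
    (⇑(rotHom K n))^[m] (wordMonomial K n w) = wordMonomial K n (shiftW (m : Fin n) w) := by
  induction m with
  | zero => simp
  | succ m ih =>
    rw [Function.iterate_succ_apply', ih, rot_wordMonomial, shiftW_shiftW]
    push_cast
    rfl

open Fin.NatCast in
lemma orbitPoly_eq_sum (w : W n) :
    orbitPoly K n w = ∑ c : Fin n, wordMonomial K n (shiftW c w) := by
  rw [orbitPoly]
  rw [← Fin.sum_univ_eq_sum_range (fun m : ℕ => (⇑(rotHom K n))^[m] (wordMonomial K n w)) n]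
  refine Finset.sum_congr rfl fun c _ => ?_
  rw [rot_iter_wordMonomial, Fin.cast_val_eq_self]

noncomputable def gOrb (u : W n) : MonoidAlgebra K (FreeMonoid (Fin n)) :=
  ∑ c : Fin n, MonoidAlgebra.single (FreeMonoid.ofList (shiftW c u)) 1

lemma e_orbitPoly (w : W n) : (e : FreeAlgebra K (Fin n) ≃ₐ[K] _) (orbitPoly K n w) = gOrb K w := by
  rw [orbitPoly_eq_sum, map_sum, gOrb]
  exact Finset.sum_congr rfl fun c _ => e_monomial K _

lemma single_mul_eq_mapDomain (p : FreeMonoid (Fin n)) (f : MonoidAlgebra K (FreeMonoid (Fin n))) :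
    MonoidAlgebra.single p (1:K) * f = MonoidAlgebra.mapDomain (fun x => p * x) f := by
  induction f using MonoidAlgebra.induction with
  | zero => simp
  | single_add a b f _ _ ih =>
    rw [mul_add, ih, MonoidAlgebra.mapDomain_add]
    congr 1
    rw [MonoidAlgebra.single_mul_single, one_mul, MonoidAlgebra.mapDomain_single]

lemma single_mul_apply_append (p v : W n) (f : MonoidAlgebra K (FreeMonoid (Fin n))) :
    (MonoidAlgebra.single (FreeMonoid.ofList p) (1:K) * f).coeff (FreeMonoid.ofList (p ++ v))
      = f.coeff (FreeMonoid.ofList v) := by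
  rw [single_mul_eq_mapDomain, FreeMonoid.ofList_append]
  exact Finsupp.mapDomain_apply (mul_right_injective _) f.coeff _

lemma single_mul_apply_of_not_prefix (p u : W n) (h : ∀ v : W n, u ≠ p ++ v)
    (f : MonoidAlgebra K (FreeMonoid (Fin n))) :
    (MonoidAlgebra.single (FreeMonoid.ofList p) (1:K) * f).coeff (FreeMonoid.ofList u) = 0 := by
  rw [single_mul_eq_mapDomain]
  apply Finsupp.mapDomain_of_notMem_range
  rintro ⟨x, hx⟩
  exact h (FreeMonoid.toList x) (by
    have := congrArg FreeMonoid.toList hx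
    rw [FreeMonoid.toList_mul] at this
    exact this.symm)

noncomputable def Phm : List (AtomWord n) → MonoidAlgebra K (FreeMonoid (Fin n))
  | [] => 1
  | a :: A => gOrb K a.1 * Phm A

lemma headL_shift_append (a : AtomWord n) (c : Fin n) (v : W n) :
    headL (shiftW c a.1 ++ v) = c := by
  rw [headL_append _ (by simp [atom_ne_nil a]), headL_shiftW c (atom_ne_nil a),
    atom_headL, zero_add]

lemma Phm_apply (A : List (AtomWord n)) (u : W n) :
    (Phm K A).coeff (FreeMonoid.ofList u) = if MemT A u then 1 else 0 := by
  induction A generalizing u with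
  | nil =>
    rw [Phm, MemT_nil]
    rw [show (1 : MonoidAlgebra K (FreeMonoid (Fin n))) = MonoidAlgebra.single 1 1 from rfl]
    rw [MonoidAlgebra.coeff_single, Finsupp.single_apply]
    by_cases hu : u = []
    · subst hu; simp
    · rw [if_neg hu, if_neg (fun hh : (1 : FreeMonoid (Fin n)) = FreeMonoid.ofList u =>
        hu (by simpa using congrArg FreeMonoid.toList hh.symm))]
  | cons a A ih =>
    rw [Phm, gOrb, Finset.sum_mul, MonoidAlgebra.coeff_sum, Finsupp.finset_sum_apply]
    by_cases hE : MemT (a :: A) u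
    · rw [if_pos hE]
      obtain ⟨c₀, v₀, rfl, hv₀⟩ := hE
      rw [Finset.sum_eq_single_of_mem c₀ (Finset.mem_univ c₀)]
      · rw [single_mul_apply_append, ih, if_pos hv₀]
      · intro c _ hc
        apply single_mul_apply_of_not_prefix
        intro v hveq
        apply hc
        have := congrArg headL hveq
        rw [headL_shift_append, headL_shift_append] at this
        exact this.symm
    · rw [if_neg hE]
      apply Finset.sum_eq_zero
      intro c _
      by_cases hd : ∃ v : W n, u = shiftW c a.1 ++ v
      · obtain ⟨v, rfl⟩ := hd
        rw [single_mul_apply_append, ih, if_neg (fun hv => hE ⟨c, v, rfl, hv⟩)]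
      · push_neg at hd
        exact single_mul_apply_of_not_prefix K _ _ hd _

lemma Phm_support_iff (A : List (AtomWord n)) (v : FreeMonoid (Fin n)) :
    v ∈ (Phm K A).coeff.support ↔ MemT A (FreeMonoid.toList v) := by
  rw [Finsupp.mem_support_iff]
  rw [show v = FreeMonoid.ofList (FreeMonoid.toList v) from rfl, Phm_apply]
  by_cases h : MemT A (FreeMonoid.toList v)
  · simp [h]
  · simp [h]

lemma Phm_eq_sum (A : List (AtomWord n)) :
    Phm K A = ∑ v ∈ (Phm K A).coeff.support, MonoidAlgebra.single v 1 := by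
  conv_lhs => rw [← MonoidAlgebra.sum_coeff_single (Phm K A)]
  rw [Finsupp.sum]
  refine Finset.sum_congr rfl fun v hv => ?_
  congr 1
  have := (Phm_support_iff K A v).mp hv
  rw [show v = FreeMonoid.ofList (FreeMonoid.toList v) from rfl, Phm_apply, if_pos this]

end Alg

end CycInv

namespace CycInv

section Alg2

variable (K : Type*) [Field K] {n : ℕ} [NeZero n]

attribute [local instance] Classical.propDecidable

local notation "e" => FreeAlgebra.equivMonoidAlgebraFreeMonoid

noncomputable def Phi (n : ℕ) : FreeAlgebra K (AtomWord n) →ₐ[K] FreeAlgebra K (Fin n) :=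
  FreeAlgebra.lift K fun a : AtomWord n => orbitPoly K n a.1

lemma e_Phi_monomial (A : List (AtomWord n)) :
    (e : FreeAlgebra K (Fin n) ≃ₐ[K] _) (Phi K n ((A.map (FreeAlgebra.ι K)).prod)) = Phm K A := by
  induction A with
  | nil => simp [Phm]
  | cons a A ih =>
    rw [List.map_cons, List.prod_cons, map_mul, map_mul, Phm, ← ih]
    congr 1
    rw [Phi, FreeAlgebra.lift_ι_apply, e_orbitPoly]

lemma sum_single_orbits (S : Finset (FreeMonoid (Fin n)))
    (h1 : ∀ v ∈ S, FreeMonoid.toList v ≠ [])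
    (h2 : ∀ v ∈ S, ∀ c : Fin n, FreeMonoid.ofList (shiftW c (FreeMonoid.toList v)) ∈ S) :
    ∑ v ∈ S, MonoidAlgebra.single v (1:K)
      = ∑ v ∈ S.filter (fun v => headL (FreeMonoid.toList v) = 0),
          gOrb K (FreeMonoid.toList v) := by
  have hsub : ∀ v ∈ S.filter (fun v => headL (FreeMonoid.toList v) = 0), v ∈ S :=
    fun v hv => Finset.mem_of_mem_filter v hv
  simp only [gOrb]
  have hprod := Finset.sum_product' (s := S.filter (fun v => headL (FreeMonoid.toList v) = 0))
    (t := (Finset.univ : Finset (Fin n)))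
    (f := fun v c => MonoidAlgebra.single (FreeMonoid.ofList (shiftW c (FreeMonoid.toList v))) (1:K))
  rw [← hprod]
  refine (Finset.sum_nbij'
      (i := fun vc : FreeMonoid (Fin n) × Fin n =>
        FreeMonoid.ofList (shiftW vc.2 (FreeMonoid.toList vc.1)))
      (j := fun w => (FreeMonoid.ofList (shiftW (-(headL (FreeMonoid.toList w)))
        (FreeMonoid.toList w)), headL (FreeMonoid.toList w)))
      ?_ ?_ ?_ ?_ ?_).symm
  · -- hi : product → S
    rintro ⟨v, c⟩ hvc
    rw [Finset.mem_product] at hvc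
    exact h2 v (hsub v hvc.1) c
  · -- hj : S → product
    intro w hw
    rw [Finset.mem_product]
    refine ⟨Finset.mem_filter.mpr ⟨h2 w hw _, ?_⟩, Finset.mem_univ _⟩
    show headL (FreeMonoid.toList (FreeMonoid.ofList _)) = 0
    simp only [FreeMonoid.toList_ofList]
    rw [headL_shiftW _ (h1 w hw)]
    simp
  · -- left inv
    rintro ⟨v, c⟩ hvc
    rw [Finset.mem_product] at hvc
    have hv0 : headL (FreeMonoid.toList v) = 0 := (Finset.mem_filter.mp hvc.1).2
    have hvne : FreeMonoid.toList v ≠ [] := h1 v (hsub v hvc.1)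
    have h3 : headL (FreeMonoid.toList (FreeMonoid.ofList (shiftW c (FreeMonoid.toList v)))) = c := by
      simp only [FreeMonoid.toList_ofList]
      rw [headL_shiftW _ hvne, hv0, zero_add]
    show (FreeMonoid.ofList _, headL (FreeMonoid.toList (FreeMonoid.ofList _))) = (v, c)
    rw [Prod.mk.injEq]
    refine ⟨?_, h3⟩
    rw [h3]
    show FreeMonoid.ofList (shiftW (-c) (FreeMonoid.toList (FreeMonoid.ofList (shiftW c (FreeMonoid.toList v))))) = v
    simp only [FreeMonoid.toList_ofList]
    rw [shiftW_shiftW]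
    simp
  · -- right inv
    intro w hw
    show FreeMonoid.ofList (shiftW (headL (FreeMonoid.toList (FreeMonoid.ofList _)))
      (FreeMonoid.toList (FreeMonoid.ofList _))) = w
    simp only [FreeMonoid.toList_ofList]
    rw [shiftW_shiftW]
    show FreeMonoid.ofList (shiftW (-headL (FreeMonoid.toList w) + headL (FreeMonoid.toList w))
      (FreeMonoid.toList w)) = w
    simp
  · rintro ⟨v, c⟩ _
    rfl

lemma gOrb_mem_range : ∀ (N : ℕ) (u : W n), u ≠ [] → (blocksOf u).length ≤ N →
    (e : FreeAlgebra K (Fin n) ≃ₐ[K] _).symm (gOrb K u) ∈ (Phi K n).range := by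
  intro N
  induction N with
  | zero =>
    intro u hu hb
    have := blocksOf_pos hu
    omega
  | succ N ihN =>
    intro u hu hb
    have hmem : MemT (factor u) u := memT_factor u
    have hkb : (blocksOf u).length = (factor u).length := (factor_length u).symm
    set A := factor u with hA
    set D' := (Phm K A).coeff.support.filter
      (fun v => (blocksOf (FreeMonoid.toList v)).length < A.length) with hD'
    have hulen : ∀ v ∈ (Phm K A).coeff.support, (FreeMonoid.toList v).length = u.length := by
      intro v hv
      rw [((Phm_support_iff K A v).mp hv).lengthEq, ← hmem.lengthEq]
    have hsplit : Phm K A = (∑ v ∈ D', MonoidAlgebra.single v 1) + gOrb K u := by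
      rw [Phm_eq_sum, ← Finset.sum_filter_add_sum_filter_not (Phm K A).coeff.support
        (fun v => (blocksOf (FreeMonoid.toList v)).length < A.length)
        (fun v => MonoidAlgebra.single v (1:K))]
      congr 1
      -- ∑ over not-lt = gOrb K u
      refine (Finset.sum_nbij' (i := fun (c : Fin n) => FreeMonoid.ofList (shiftW c u))
        (j := fun w => headL (FreeMonoid.toList w) - headL u)
        ?_ ?_ ?_ ?_ ?_ (s := Finset.univ)).symm
      · intro c _
        rw [Finset.mem_filter]
        constructor
        · rw [Phm_support_iff, FreeMonoid.toList_ofList]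
          exact hmem.shiftW' c
        · rw [not_lt, FreeMonoid.toList_ofList,
            length_blocksOf_shiftW c u.length u le_rfl, hkb]
      · intro w _
        exact Finset.mem_univ _
      · intro c _
        show headL (FreeMonoid.toList (FreeMonoid.ofList (shiftW c u))) - headL u = c
        simp only [FreeMonoid.toList_ofList]
        rw [headL_shiftW _ hu]
        simp
      · intro w hw
        rw [Finset.mem_filter, not_lt] at hw
        obtain ⟨hws, hwb⟩ := hw
        have hwmem : MemT A (FreeMonoid.toList w) := (Phm_support_iff K A w).mp hws
        have hwne : FreeMonoid.toList w ≠ [] := by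
          intro hh
          have := hulen w hws
          rw [hh] at this
          simp only [List.length_nil] at this
          exact hu (List.length_eq_zero_iff.mp this.symm)
        have hble := memT_blocksOf hwmem
        have heq : (blocksOf (FreeMonoid.toList w)).length = A.length :=
          le_antisymm hble.1 hwb
        have hfw : factor (FreeMonoid.toList w) = A := hble.2 heq
        have hw_join : joinC A (headL (FreeMonoid.toList w)) = FreeMonoid.toList w := by
          rw [← hfw]
          exact joinC_factor hwne
        have hu_join : joinC A (headL u) = u := by
          rw [hA]
          exact joinC_factor hu
        set d := headL (FreeMonoid.toList w) - headL u with hd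
        have hsh : shiftW d u = FreeMonoid.toList w := by
          conv_lhs => rw [← hu_join]
          rw [shiftW_joinC, hd]
          rw [show headL u + (headL (FreeMonoid.toList w) - headL u)
              = headL (FreeMonoid.toList w) from by abel, hw_join]
        rw [hsh]
        rfl
      · intro c _
        rfl
    -- orbit decomposition of D'
    have hD'1 : ∀ v ∈ D', FreeMonoid.toList v ≠ [] := by
      intro v hv
      have hvs := Finset.mem_of_mem_filter v hv
      intro hh
      have := hulen v hvs
      rw [hh] at this
      simp only [List.length_nil] at this
      exact hu (List.length_eq_zero_iff.mp this.symm)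
    have hD'2 : ∀ v ∈ D', ∀ c : Fin n, FreeMonoid.ofList (shiftW c (FreeMonoid.toList v)) ∈ D' := by
      intro v hv c
      rw [hD', Finset.mem_filter] at hv ⊢
      obtain ⟨hvs, hvb⟩ := hv
      constructor
      · rw [Phm_support_iff, FreeMonoid.toList_ofList]
        exact ((Phm_support_iff K A v).mp hvs).shiftW' c
      · rw [FreeMonoid.toList_ofList,
          length_blocksOf_shiftW c (FreeMonoid.toList v).length _ le_rfl]
        exact hvb
    have horb := sum_single_orbits K D' hD'1 hD'2
    have hgOrb_eq : gOrb K u = Phm K A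
        - ∑ v ∈ D'.filter (fun v => headL (FreeMonoid.toList v) = 0),
            gOrb K (FreeMonoid.toList v) := by
      rw [← horb, hsplit]
      abel
    rw [hgOrb_eq, map_sub, map_sum]
    apply Subalgebra.sub_mem
    · have := e_Phi_monomial K A
      have h2 : (e : FreeAlgebra K (Fin n) ≃ₐ[K] _).symm (Phm K A)
          = Phi K n ((A.map (FreeAlgebra.ι K)).prod) := by
        rw [← this, AlgEquiv.symm_apply_apply]
      rw [h2]
      exact ⟨_, rfl⟩
    · apply Subalgebra.sum_mem
      intro w hw
      have hwD' := Finset.mem_of_mem_filter w hw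
      have hwne := hD'1 w hwD'
      have hwlt : (blocksOf (FreeMonoid.toList w)).length < A.length :=
        (Finset.mem_filter.mp hwD').2
      exact ihN (FreeMonoid.toList w) hwne (by omega)

end Alg2

end CycInv

namespace CycInv

section Alg3

variable (K : Type*) [Field K] {n : ℕ} [NeZero n]

attribute [local instance] Classical.propDecidable

local notation "e" => FreeAlgebra.equivMonoidAlgebraFreeMonoid

lemma e_iota {X : Type*} (a : X) :
    (e : FreeAlgebra K X ≃ₐ[K] _) (FreeAlgebra.ι K a)
      = MonoidAlgebra.single (FreeMonoid.of a) 1 := by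
  simp [FreeAlgebra.equivMonoidAlgebraFreeMonoid]

lemma rot_orbitPoly (w : W n) : rotHom K n (orbitPoly K n w) = orbitPoly K n w := by
  rw [orbitPoly_eq_sum, map_sum]
  calc ∑ c : Fin n, rotHom K n (wordMonomial K n (shiftW c w))
      = ∑ c : Fin n, wordMonomial K n (shiftW (c + 1) w) :=
        Finset.sum_congr rfl fun c _ => by rw [rot_wordMonomial, shiftW_shiftW]
    _ = ∑ c : Fin n, wordMonomial K n (shiftW c w) :=
        Fintype.sum_equiv (Equiv.addRight (1 : Fin n)) _ _ (fun c => rfl)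

lemma rot_Phi (z : FreeAlgebra K (AtomWord n)) :
    rotHom K n (Phi K n z) = Phi K n z := by
  have h : (rotHom K n).comp (Phi K n) = Phi K n := by
    apply FreeAlgebra.hom_ext
    funext a
    show rotHom K n (Phi K n (FreeAlgebra.ι K a)) = Phi K n (FreeAlgebra.ι K a)
    rw [Phi, FreeAlgebra.lift_ι_apply, rot_orbitPoly]
  exact DFunLike.congr_fun h z

lemma iter_rot_Phi (z : FreeAlgebra K (AtomWord n)) (m : ℕ) :
    (⇑(rotHom K n))^[m] (Phi K n z) = Phi K n z := by
  induction m with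
  | zero => rfl
  | succ m ih => rw [Function.iterate_succ_apply', ih, rot_Phi]

lemma e_rotHom_eq :
    ((e : FreeAlgebra K (Fin n) ≃ₐ[K] _) : FreeAlgebra K (Fin n) →ₐ[K] _).comp (rotHom K n)
      = (MonoidAlgebra.mapDomainAlgHom K K
          (FreeMonoid.map (fun i : Fin n => i + 1))).comp
        ((e : FreeAlgebra K (Fin n) ≃ₐ[K] _) : FreeAlgebra K (Fin n) →ₐ[K] _) := by
  apply FreeAlgebra.hom_ext
  funext a
  show (e : FreeAlgebra K (Fin n) ≃ₐ[K] _) (rotHom K n (FreeAlgebra.ι K a))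
    = MonoidAlgebra.mapDomainAlgHom K K (FreeMonoid.map (fun i : Fin n => i + 1))
        ((e : FreeAlgebra K (Fin n) ≃ₐ[K] _) (FreeAlgebra.ι K a))
  rw [rotHom, FreeAlgebra.lift_ι_apply, finRotate_eq_add_one, e_iota, e_iota]
  show _ = MonoidAlgebra.mapDomain (⇑(FreeMonoid.map (fun i : Fin n => i + 1)))
    (MonoidAlgebra.single (FreeMonoid.of a) 1)
  rw [MonoidAlgebra.mapDomain_single, FreeMonoid.map_of]

open Fin.NatCast in
lemma coeff_rot_inv {p : FreeAlgebra K (Fin n)} (hp : rotHom K n p = p) (c : Fin n) (u : W n) :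
    ((e : FreeAlgebra K (Fin n) ≃ₐ[K] _) p).coeff (FreeMonoid.ofList (shiftW c u))
      = ((e : FreeAlgebra K (Fin n) ≃ₐ[K] _) p).coeff (FreeMonoid.ofList u) := by
  set f := (e : FreeAlgebra K (Fin n) ≃ₐ[K] _) p with hfdef
  have hf : f = MonoidAlgebra.mapDomain (⇑(FreeMonoid.map (fun i : Fin n => i + 1))) f := by
    conv_lhs => rw [hfdef, ← hp]
    exact DFunLike.congr_fun (e_rotHom_eq K) p
  have hinj : Function.Injective ⇑(FreeMonoid.map (fun i : Fin n => i + 1)) := by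
    intro x y hxy
    have h2 := congrArg FreeMonoid.toList hxy
    rw [FreeMonoid.toList_map, FreeMonoid.toList_map] at h2
    have h3 : FreeMonoid.toList x = FreeMonoid.toList y :=
      List.map_injective_iff.mpr (fun a b hab => by simpa using hab) h2
    exact FreeMonoid.toList.injective h3
  have h1 : ∀ u : W n, f.coeff (FreeMonoid.ofList (shiftW 1 u)) = f.coeff (FreeMonoid.ofList u) := by
    intro u
    have heq : FreeMonoid.ofList (shiftW 1 u)
        = FreeMonoid.map (fun i : Fin n => i + 1) (FreeMonoid.ofList u) := rfl
    rw [heq]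
    calc f.coeff (FreeMonoid.map (fun i : Fin n => i + 1) (FreeMonoid.ofList u))
        = (MonoidAlgebra.mapDomain (⇑(FreeMonoid.map (fun i : Fin n => i + 1))) f).coeff
            (FreeMonoid.map (fun i : Fin n => i + 1) (FreeMonoid.ofList u)) := by
          conv_lhs => rw [hf]
      _ = f.coeff (FreeMonoid.ofList u) := Finsupp.mapDomain_apply hinj _ _
  have hm : ∀ (m : ℕ) (u : W n),
      f.coeff (FreeMonoid.ofList (shiftW ((m : ℕ) : Fin n) u)) = f.coeff (FreeMonoid.ofList u) := by
    intro m
    induction m with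
    | zero => intro u; rw [Nat.cast_zero, shiftW_zero]
    | succ m ih =>
      intro u
      have hcast : ((m + 1 : ℕ) : Fin n) = ((m : ℕ) : Fin n) + 1 := by push_cast; ring
      rw [hcast, ← shiftW_shiftW, h1, ih]
  have := hm c.val u
  rwa [Fin.cast_val_eq_self] at this

lemma finsupp_eq_sum_single' {α : Type*} (f : MonoidAlgebra K α) :
    f = ∑ a ∈ f.coeff.support, MonoidAlgebra.single a (f.coeff a) := by
  conv_lhs => rw [← MonoidAlgebra.sum_coeff_single f]
  rfl

lemma sum_single_orbits_wt (S : Finset (FreeMonoid (Fin n))) (wt : FreeMonoid (Fin n) → K)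
    (h1 : ∀ v ∈ S, FreeMonoid.toList v ≠ [])
    (h2 : ∀ v ∈ S, ∀ c : Fin n, FreeMonoid.ofList (shiftW c (FreeMonoid.toList v)) ∈ S)
    (h3 : ∀ v ∈ S, ∀ c : Fin n, wt (FreeMonoid.ofList (shiftW c (FreeMonoid.toList v))) = wt v) :
    ∑ v ∈ S, MonoidAlgebra.single v (wt v)
      = ∑ v ∈ S.filter (fun v => headL (FreeMonoid.toList v) = 0),
          wt v • gOrb K (FreeMonoid.toList v) := by
  have hsub : ∀ v ∈ S.filter (fun v => headL (FreeMonoid.toList v) = 0), v ∈ S :=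
    fun v hv => Finset.mem_of_mem_filter v hv
  simp only [gOrb, Finset.smul_sum]
  have hprod := Finset.sum_product' (s := S.filter (fun v => headL (FreeMonoid.toList v) = 0))
    (t := (Finset.univ : Finset (Fin n)))
    (f := fun v c => wt v • MonoidAlgebra.single
      (FreeMonoid.ofList (shiftW c (FreeMonoid.toList v))) (1:K))
  rw [← hprod]
  refine (Finset.sum_nbij'
      (i := fun vc : FreeMonoid (Fin n) × Fin n =>
        FreeMonoid.ofList (shiftW vc.2 (FreeMonoid.toList vc.1)))
      (j := fun w => (FreeMonoid.ofList (shiftW (-(headL (FreeMonoid.toList w)))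
        (FreeMonoid.toList w)), headL (FreeMonoid.toList w)))
      ?_ ?_ ?_ ?_ ?_).symm
  · rintro ⟨v, c⟩ hvc
    rw [Finset.mem_product] at hvc
    exact h2 v (hsub v hvc.1) c
  · intro w hw
    rw [Finset.mem_product]
    refine ⟨Finset.mem_filter.mpr ⟨h2 w hw _, ?_⟩, Finset.mem_univ _⟩
    show headL (FreeMonoid.toList (FreeMonoid.ofList _)) = 0
    simp only [FreeMonoid.toList_ofList]
    rw [headL_shiftW _ (h1 w hw)]
    simp
  · rintro ⟨v, c⟩ hvc
    rw [Finset.mem_product] at hvc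
    have hv0 : headL (FreeMonoid.toList v) = 0 := (Finset.mem_filter.mp hvc.1).2
    have hvne : FreeMonoid.toList v ≠ [] := h1 v (hsub v hvc.1)
    have h4 : headL (FreeMonoid.toList (FreeMonoid.ofList (shiftW c (FreeMonoid.toList v)))) = c := by
      simp only [FreeMonoid.toList_ofList]
      rw [headL_shiftW _ hvne, hv0, zero_add]
    show (FreeMonoid.ofList _, headL (FreeMonoid.toList (FreeMonoid.ofList _))) = (v, c)
    rw [Prod.mk.injEq]
    refine ⟨?_, h4⟩
    rw [h4]
    show FreeMonoid.ofList (shiftW (-c)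
      (FreeMonoid.toList (FreeMonoid.ofList (shiftW c (FreeMonoid.toList v))))) = v
    simp only [FreeMonoid.toList_ofList]
    rw [shiftW_shiftW]
    simp
  · intro w hw
    show FreeMonoid.ofList (shiftW (headL (FreeMonoid.toList (FreeMonoid.ofList _)))
      (FreeMonoid.toList (FreeMonoid.ofList _))) = w
    simp only [FreeMonoid.toList_ofList]
    rw [shiftW_shiftW]
    show FreeMonoid.ofList (shiftW (-headL (FreeMonoid.toList w) + headL (FreeMonoid.toList w))
      (FreeMonoid.toList w)) = w
    simp
  · rintro ⟨v, c⟩ hvc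
    rw [Finset.mem_product] at hvc
    show wt v • MonoidAlgebra.single (FreeMonoid.ofList (shiftW c (FreeMonoid.toList v))) (1:K)
      = MonoidAlgebra.single (FreeMonoid.ofList (shiftW c (FreeMonoid.toList v)))
        (wt (FreeMonoid.ofList (shiftW c (FreeMonoid.toList v))))
    rw [h3 v (hsub v hvc.1) c, MonoidAlgebra.smul_single', mul_one]

lemma invariant_mem_range {p : FreeAlgebra K (Fin n)} (hp : rotHom K n p = p) :
    p ∈ (Phi K n).range := by
  set f := (e : FreeAlgebra K (Fin n) ≃ₐ[K] _) p with hfdef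
  have hcoeff : ∀ (c : Fin n) (u : W n),
      f.coeff (FreeMonoid.ofList (shiftW c u)) = f.coeff (FreeMonoid.ofList u) :=
    fun c u => coeff_rot_inv K hp c u
  set S := f.coeff.support.erase 1 with hS
  have hS1 : ∀ v ∈ S, FreeMonoid.toList v ≠ [] := by
    intro v hv hh
    have : v = 1 := FreeMonoid.toList.injective hh
    exact (Finset.mem_erase.mp hv).1 this
  have hwt : ∀ (v : FreeMonoid (Fin n)) (c : Fin n),
      f.coeff (FreeMonoid.ofList (shiftW c (FreeMonoid.toList v))) = f.coeff v := by
    intro v c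
    have := hcoeff c (FreeMonoid.toList v)
    rwa [FreeMonoid.ofList_toList] at this
  have hS2 : ∀ v ∈ S, ∀ c : Fin n, FreeMonoid.ofList (shiftW c (FreeMonoid.toList v)) ∈ S := by
    intro v hv c
    rw [hS, Finset.mem_erase]
    constructor
    · intro hh
      apply hS1 v hv
      have := congrArg FreeMonoid.toList hh
      rw [FreeMonoid.toList_ofList, FreeMonoid.toList_one] at this
      simpa using this
    · rw [Finsupp.mem_support_iff, hwt]
      exact Finsupp.mem_support_iff.mp (Finset.mem_of_mem_erase hv)
  have hsplit : f = MonoidAlgebra.single 1 (f.coeff 1)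
      + ∑ v ∈ S, MonoidAlgebra.single v (f.coeff v) := by
    by_cases h1s : (1 : FreeMonoid (Fin n)) ∈ f.coeff.support
    · conv_lhs => rw [finsupp_eq_sum_single' K f]
      rw [← Finset.add_sum_erase _ _ h1s]
    · rw [Finsupp.notMem_support_iff.mp h1s]
      rw [show MonoidAlgebra.single (1 : FreeMonoid (Fin n)) (0:K) = 0 from MonoidAlgebra.single_zero 1,
        zero_add, hS, Finset.erase_eq_of_notMem h1s]
      exact finsupp_eq_sum_single' K f
  have horb := sum_single_orbits_wt K S (fun v => f.coeff v) hS1 hS2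
    (fun v hv c => hwt v c)
  have hpf : p = (e : FreeAlgebra K (Fin n) ≃ₐ[K] _).symm f := by
    rw [hfdef, AlgEquiv.symm_apply_apply]
  rw [hpf, hsplit, horb, map_add, map_sum]
  apply add_mem
  · have h9 : MonoidAlgebra.single (1 : FreeMonoid (Fin n)) (f.coeff 1)
        = f.coeff 1 • (1 : MonoidAlgebra K (FreeMonoid (Fin n))) := by
      rw [show (1 : MonoidAlgebra K (FreeMonoid (Fin n)))
        = MonoidAlgebra.single 1 1 from rfl, MonoidAlgebra.smul_single', mul_one]
    rw [h9, map_smul]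
    have h10 : (e : FreeAlgebra K (Fin n) ≃ₐ[K] _).symm 1 = 1 := map_one _
    rw [h10]
    exact Subalgebra.smul_mem _ (one_mem _) _
  · apply Subalgebra.sum_mem
    intro v hv
    rw [map_smul]
    apply Subalgebra.smul_mem
    have hvne : FreeMonoid.toList v ≠ [] := hS1 v (Finset.mem_of_mem_filter v hv)
    exact gOrb_mem_range K (blocksOf (FreeMonoid.toList v)).length
      (FreeMonoid.toList v) hvne le_rfl

lemma finsupp_eq_sum_single {α : Type*} (f : MonoidAlgebra K α) :
    f = ∑ a ∈ f.coeff.support, MonoidAlgebra.single a (f.coeff a) := by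
  conv_lhs => rw [← MonoidAlgebra.sum_coeff_single f]
  rfl

lemma e_Phi_apply (x : FreeAlgebra K (AtomWord n)) :
    (e : FreeAlgebra K (Fin n) ≃ₐ[K] _) (Phi K n x)
      = ∑ A ∈ ((e : FreeAlgebra K (AtomWord n) ≃ₐ[K] _) x).coeff.support,
          ((e : FreeAlgebra K (AtomWord n) ≃ₐ[K] _) x).coeff A • Phm K (FreeMonoid.toList A) := by
  set y := (e : FreeAlgebra K (AtomWord n) ≃ₐ[K] _) x with hy
  have hx : x = ∑ A ∈ y.coeff.support,
      y.coeff A • ((FreeMonoid.toList A).map (FreeAlgebra.ι K)).prod := by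
    apply (e : FreeAlgebra K (AtomWord n) ≃ₐ[K] _).injective
    rw [map_sum]
    rw [Finset.sum_congr rfl (fun A (_ : A ∈ y.coeff.support) => by
      rw [map_smul, e_monomial K (FreeMonoid.toList A)])]
    rw [Finset.sum_congr rfl (fun A (_ : A ∈ y.coeff.support) =>
      show y.coeff A • MonoidAlgebra.single (FreeMonoid.ofList (FreeMonoid.toList A)) (1:K)
          = MonoidAlgebra.single A (y.coeff A) from by
        rw [FreeMonoid.ofList_toList, MonoidAlgebra.smul_single', mul_one])]
    rw [← finsupp_eq_sum_single]
  conv_lhs => rw [hx, map_sum, map_sum]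
  refine Finset.sum_congr rfl fun A _ => ?_
  rw [map_smul, map_smul, e_Phi_monomial]

end Alg3

end CycInv

open CycInv in
theorem invariants_free_on_atom_orbitPolys
    (K : Type*) [Field K] [CharZero K] (n : ℕ) (hn : 3 ≤ n) :
    Function.Injective
      ⇑(FreeAlgebra.lift K fun a : AtomWord n => orbitPoly K n a.1) ∧
    Set.range ⇑(FreeAlgebra.lift K fun a : AtomWord n => orbitPoly K n a.1) =
      {p : FreeAlgebra K (Fin n) | ∀ m : ℕ, (⇑(rotHom K n))^[m] p = p} := by
  classical
  haveI : NeZero n := ⟨by omega⟩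
  have hPhi : (FreeAlgebra.lift K fun a : AtomWord n => orbitPoly K n a.1) = Phi K n := rfl
  rw [hPhi]
  constructor
  · rw [injective_iff_map_eq_zero]
    intro x hx
    by_contra hne
    have hyne : (FreeAlgebra.equivMonoidAlgebraFreeMonoid
        : FreeAlgebra K (AtomWord n) ≃ₐ[K] _) x ≠ 0 := by
      intro hh
      apply hne
      have := congrArg (FreeAlgebra.equivMonoidAlgebraFreeMonoid
        : FreeAlgebra K (AtomWord n) ≃ₐ[K] _).symm hh
      rwa [AlgEquiv.symm_apply_apply, map_zero] at this
    set y := (FreeAlgebra.equivMonoidAlgebraFreeMonoid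
        : FreeAlgebra K (AtomWord n) ≃ₐ[K] _) x with hy
    have hsupp : y.coeff.support.Nonempty := Finsupp.support_nonempty_iff.mpr (mt MonoidAlgebra.coeff_eq_zero.mp hyne)
    obtain ⟨A₁, hA₁⟩ := hsupp
    set Sf := y.coeff.support.filter
      (fun A => lenT (FreeMonoid.toList A) = lenT (FreeMonoid.toList A₁)) with hSf
    have hSfne : Sf.Nonempty := ⟨A₁, Finset.mem_filter.mpr ⟨hA₁, rfl⟩⟩
    obtain ⟨As, hAs, hmax⟩ :=
      Finset.exists_max_image Sf (fun A => (FreeMonoid.toList A).length) hSfne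
    set u := joinC (FreeMonoid.toList As) 0 with hu
    have hmemAs : MemT (FreeMonoid.toList As) u := memT_joinC _ 0
    have hblocks : (blocksOf u).length = (FreeMonoid.toList As).length :=
      length_blocksOf_joinC _ 0
    have hAsS := Finset.mem_filter.mp hAs
    have hfacAs : factor u = FreeMonoid.toList As := (memT_blocksOf hmemAs).2 hblocks
    have hzero : (FreeAlgebra.equivMonoidAlgebraFreeMonoid (Phi K n x)).coeff
        (FreeMonoid.ofList u) = 0 := by
      rw [hx, map_zero]
      rfl
    rw [e_Phi_apply, MonoidAlgebra.coeff_sum, Finsupp.finset_sum_apply] at hzero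
    have hterm : ∀ A ∈ y.coeff.support,
        (y.coeff A • Phm K (FreeMonoid.toList A)).coeff (FreeMonoid.ofList u)
          = if MemT (FreeMonoid.toList A) u then y.coeff A else 0 := by
      intro A _
      rw [MonoidAlgebra.coeff_smul_apply, Phm_apply, smul_eq_mul]
      by_cases h : MemT (FreeMonoid.toList A) u
      · rw [if_pos h, if_pos h, mul_one]
      · rw [if_neg h, if_neg h, mul_zero]
    rw [Finset.sum_congr rfl hterm] at hzero
    have hne' : ∀ A ∈ y.coeff.support, A ≠ As →
        (if MemT (FreeMonoid.toList A) u then y.coeff A else 0) = 0 := by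
      intro A hA hAne
      rw [if_neg]
      intro hM
      have hlenA : lenT (FreeMonoid.toList A) = lenT (FreeMonoid.toList As) := by
        rw [← hM.lengthEq, hmemAs.lengthEq]
      have hASf : A ∈ Sf := Finset.mem_filter.mpr ⟨hA, by rw [hlenA, hAsS.2]⟩
      have hle1 : (blocksOf u).length ≤ (FreeMonoid.toList A).length :=
        (memT_blocksOf hM).1
      have hle2 : (FreeMonoid.toList A).length ≤ (FreeMonoid.toList As).length :=
        hmax A hASf
      have heq : (blocksOf u).length = (FreeMonoid.toList A).length := by omega
      have := (memT_blocksOf hM).2 heq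
      rw [hfacAs] at this
      exact hAne (FreeMonoid.toList.injective this.symm)
    rw [Finset.sum_eq_single_of_mem As hAsS.1 hne', if_pos hmemAs] at hzero
    exact Finsupp.mem_support_iff.mp hAsS.1 hzero
  · ext p
    simp only [Set.mem_range, Set.mem_setOf_eq]
    constructor
    · rintro ⟨z, rfl⟩ m
      exact iter_rot_Phi K z m
    · intro hinv
      have h1 : rotHom K n p = p := by
        have := hinv 1
        rwa [Function.iterate_one] at this
      exact (AlgHom.mem_range _).mp (invariant_mem_range K h1)
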